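/- Let n ≥ 3 and let G be a dot irreducible sawtooth dot graph over {1,…,n−1} with segment list [(p_1,q_1),…,(p_r,q_r)]. Suppose that for some indices i < j and some value 2 ≤ k ≤ n−1 one has (p_i,q_i) = (1,k) and (p_j,q_j) = (1,k−1). Then there is no index l with i < l < j and q_l ≤ k; that is, every segment lying strictly between these two segments ends above k. -/

import Mathlib

/-- The underlying sequence of a dot graph given as a list of ascending
segments `(p, q)`: segment `(p, q)` contributes `p, p+1, …, q`. -/
def toSeq (L : List (ℕ × ℕ)) : List ℕ :=
  L.flatMap fun s => List.range' s.1 (s.2 - s.1 + 1)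

/-- `L` is the list of maximal ascending segments of a sawtooth dot graph over
`{1, …, n-1}`: `1 ≤ pᵢ ≤ qᵢ ≤ n-1` for all `i`, and `p_{i+1} ≤ q_i` for all `i`. -/
def IsSawtooth (n : ℕ) (L : List (ℕ × ℕ)) : Prop :=
  (∀ s ∈ L, 1 ≤ s.1 ∧ s.1 ≤ s.2 ∧ s.2 ≤ n - 1) ∧
  ∀ (i : ℕ) (h : i + 1 < L.length),
    (L.get ⟨i + 1, h⟩).1 ≤ (L.get ⟨i, Nat.lt_of_succ_lt h⟩).2

/-- A sawtooth dot graph (given by its segment list) is dot reducible if it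
contains a horizontal line, a box, a hexagon of type 1 or 2, a double box, or
a double hexagon. -/
def DotReducible (L : List (ℕ × ℕ)) : Prop :=
  -- horizontal line
  (∃ (i : ℕ) (h : i + 1 < L.length),
      (L.get ⟨i, Nat.lt_of_succ_lt h⟩).2 = (L.get ⟨i + 1, h⟩).1) ∨
  -- box
  (∃ i j : Fin L.length, i < j ∧
      (L.get i).1 ≤ (L.get j).1 ∧ (L.get i).2 ≤ (L.get j).2) ∨
  -- hexagon of type 1
  (∃ i j l : Fin L.length, i < j ∧ j < l ∧
      (L.get i).1 ≤ (L.get j).1 ∧ (L.get i).2 ≤ (L.get l).2 ∧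
      (L.get l).1 ≤ (L.get j).2) ∨
  -- hexagon of type 2
  (∃ i j l : Fin L.length, i < j ∧ j < l ∧
      (L.get i).1 ≤ (L.get l).1 ∧ (L.get j).2 ≤ (L.get l).2 ∧
      (L.get j).1 ≤ (L.get i).2) ∨
  -- double box
  (∃ i j l : Fin L.length, i < j ∧ j < l ∧
      (L.get i).2 ≤ (L.get j).2 ∧ (L.get j).1 ≤ (L.get l).1 ∧
      (L.get i).1 ≤ (L.get l).2 + 1) ∨
  -- double hexagon
  (∃ i j l m : Fin L.length, i < j ∧ j ≤ l ∧ l < m ∧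
      (L.get i).1 ≤ (L.get j).1 ∧ (L.get l).2 ≤ (L.get m).2)

/-- The spindle at `k` over `{1, …, n-1}`: segments `(s, n-1)` for
`s = n-1` down to `k+2`, then `(1, n-1)`, then `(1, t)` for `t = k` down to `1`. -/
def spindle (n k : ℕ) : List (ℕ × ℕ) :=
  ((List.range (n - 2 - k)).map fun i => (n - 1 - i, n - 1)) ++
    [(1, n - 1)] ++
    ((List.range k).map fun i => (1, k - i))

/-- `L` is a maximal dot irreducible sawtooth dot graph over `{1, …, n-1}`:
it is dot irreducible, and every sawtooth dot graph over `{1, …, n-1}`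
containing it as a proper subsequence is dot reducible. -/
def MaxDotIrreducible (n : ℕ) (L : List (ℕ × ℕ)) : Prop :=
  IsSawtooth n L ∧ ¬ DotReducible L ∧
  ∀ M : List (ℕ × ℕ), IsSawtooth n M → List.Sublist (toSeq L) (toSeq M) →
    toSeq L ≠ toSeq M → DotReducible M

/-- In a dot irreducible sawtooth dot graph, if segment `i` is `(1, k)` and a
later segment `j` is `(1, k-1)` (with `2 ≤ k ≤ n-1`), then every segment
strictly between them ends above `k`. -/
theorem between_segments_end_high (n : ℕ) (hn : 3 ≤ n)
    (L : List (ℕ × ℕ)) (hL : IsSawtooth n L) (hirr : ¬ DotReducible L)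
    (k : ℕ) (hk1 : 2 ≤ k) (hk2 : k ≤ n - 1)
    (i j : Fin L.length) (hij : i < j)
    (hi : L.get i = (1, k)) (hj : L.get j = (1, k - 1)) :
    ∀ l : Fin L.length, i < l → l < j → k < (L.get l).2 := by
  intro l hil hlj
  by_contra h
  push_neg at h
  apply hirr
  have hbl := hL.1 _ (L.get_mem l)
  rcases eq_or_lt_of_le h with heq | hlt
  · -- q_l = k : box formed by segments i and l
    exact Or.inr (Or.inl ⟨i, l, hil, by rw [hi]; exact hbl.1, by rw [hi]; omega⟩)
  · -- q_l < k : hexagon of type 2 formed by segments i, l, j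
    refine Or.inr (Or.inr (Or.inr (Or.inl ⟨i, l, j, hil, hlj, ?_, ?_, ?_⟩)))
    · rw [hi, hj]
    · rw [hj]; omega
    · rw [hi]; exact le_trans hbl.2.1 h
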